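/- Let T > 0 and let f, h : ℝ → ℂ be Schwartz functions. Then ∫_{ℝ∖{0}} (k e^{−k/T}/(1 − e^{−k/T})) f̂(k) ĥ(−k) dk = ∫_{ℝ∖{0}} (k/(1 − e^{−k/T})) ĥ(k) f̂(−k) dk, both integrals converging absolutely. -/

import Mathlib

open MeasureTheory Complex

/-- The Fourier transform `f̂(k) = ∫ f(u) e^{−iku} du` of an (integrable)
function `f : ℝ → ℂ`. -/
noncomputable def ft (f : ℝ → ℂ) (k : ℝ) : ℂ :=
  ∫ u : ℝ, f u * Complex.exp (-Complex.I * k * u)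

lemma exp_prod (T k : ℝ) : Real.exp (-k / T) * Real.exp (k / T) = 1 := by
  rw [← Real.exp_add, neg_div, neg_add_cancel, Real.exp_zero]

/-- Bound on the Bose weight: `|k/(1 - e^{-k/T})| ≤ |k| + T`. -/
lemma bB {T : ℝ} (hT : 0 < T) (k : ℝ) :
    |k / (1 - Real.exp (-k / T))| ≤ |k| + T := by
  rcases lt_trichotomy k 0 with hk | hk | hk
  · have he : 1 < Real.exp (-k / T) := by
      rw [Real.one_lt_exp_iff]
      exact div_pos (by linarith) hT
    have hd : 1 - Real.exp (-k / T) < 0 := by linarith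
    have hpos : 0 < k / (1 - Real.exp (-k / T)) := div_pos_of_neg_of_neg hk hd
    rw [abs_of_pos hpos, abs_of_neg hk]
    have h2 : -k / T + 1 ≤ Real.exp (-k / T) := Real.add_one_le_exp _
    have heq : T * (-k / T + 1) = -k + T := by field_simp
    have h2' : -k + T ≤ T * Real.exp (-k / T) := by
      rw [← heq]; exact mul_le_mul_of_nonneg_left h2 hT.le
    rw [div_le_iff_of_neg hd]
    nlinarith [mul_le_mul_of_nonneg_left he.le (neg_nonneg.2 hk.le)]
  · simp [hk]; positivity
  · have he : Real.exp (-k / T) < 1 := by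
      rw [Real.exp_lt_one_iff, neg_div]
      have : 0 < k / T := div_pos hk hT
      linarith
    have hd : 0 < 1 - Real.exp (-k / T) := by linarith
    have hpos : 0 < k / (1 - Real.exp (-k / T)) := div_pos hk hd
    rw [abs_of_pos hpos, abs_of_pos hk, div_le_iff₀ hd]
    have h2 : k / T + 1 ≤ Real.exp (k / T) := Real.add_one_le_exp _
    have heq : T * (k / T + 1) = k + T := by field_simp
    have h2' : k + T ≤ T * Real.exp (k / T) := by
      rw [← heq]; exact mul_le_mul_of_nonneg_left h2 hT.le
    have h4 : (0:ℝ) < Real.exp (-k / T) := Real.exp_pos _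
    have h6 : (k + T) * Real.exp (-k / T) ≤ T := by
      calc (k + T) * Real.exp (-k / T) ≤ T * Real.exp (k / T) * Real.exp (-k / T) :=
            mul_le_mul_of_nonneg_right h2' h4.le
        _ = T * (Real.exp (-k / T) * Real.exp (k / T)) := by ring
        _ = T := by rw [exp_prod, mul_one]
    nlinarith

/-- The weight identity relating the two Bose factors. -/
lemma wid {T : ℝ} (hT : 0 < T) (k : ℝ) :
    k * Real.exp (-k / T) / (1 - Real.exp (-k / T)) = -k / (1 - Real.exp (k / T)) := by
  rcases eq_or_ne k 0 with rfl | hk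
  · simp
  · have h3 := exp_prod T k
    have h1 : Real.exp (-k / T) ≠ 1 := by
      intro h
      rw [Real.exp_eq_one_iff, neg_div, neg_eq_zero, div_eq_zero_iff] at h
      exact h.elim hk hT.ne'
    have h2 : Real.exp (k / T) ≠ 1 := by
      intro h
      rw [Real.exp_eq_one_iff, div_eq_zero_iff] at h
      exact h.elim hk hT.ne'
    have hd1 : 1 - Real.exp (-k / T) ≠ 0 := fun h => h1 (by linarith)
    have hd2 : 1 - Real.exp (k / T) ≠ 0 := fun h => h2 (by linarith)
    rw [div_eq_div_iff hd1 hd2]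
    linear_combination (-k) * h3

lemma ft_eq (f : SchwartzMap ℝ ℂ) (k : ℝ) :
    ft (fun u => f u) k = SchwartzMap.fourierTransformCLM ℝ f (k / (2 * Real.pi)) := by
  rw [SchwartzMap.fourierTransformCLM_apply, SchwartzMap.fourier_coe,
    Real.fourier_real_eq_integral_exp_smul]
  unfold ft
  congr 1
  funext v
  rw [smul_eq_mul, mul_comm]
  congr 2
  have : -2 * Real.pi * v * (k / (2 * Real.pi)) = -(v * k) := by
    field_simp
  rw [this]
  push_cast
  ring

lemma intmaj (T : ℝ) (g : SchwartzMap ℝ ℂ) :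
    Integrable (fun k : ℝ => (|k| + T) * ‖g (k / (2 * Real.pi))‖) := by
  have hπ : (0:ℝ) < 2 * Real.pi := by positivity
  have I1 : Integrable (fun x : ℝ => ‖x‖ * ‖g x‖) := by
    simpa using g.integrable_pow_mul (μ := volume) 1
  have I1c := I1.comp_div hπ.ne'
  have I2c := (g.integrable (μ := volume)).norm.comp_div hπ.ne'
  have heq : (fun k : ℝ => (|k| + T) * ‖g (k / (2 * Real.pi))‖) =
      fun k => (2 * Real.pi) * (‖k / (2 * Real.pi)‖ * ‖g (k / (2 * Real.pi))‖)
        + T * ‖g (k / (2 * Real.pi))‖ := by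
    funext k
    rw [Real.norm_eq_abs, abs_div, abs_of_pos hπ]
    field_simp
  rw [heq]
  exact (I1c.const_mul _).add (I2c.const_mul _)

lemma main_integrable (T : ℝ) (w : ℝ → ℝ) (hw : Measurable w)
    (hwb : ∀ k, |w k| ≤ |k| + T) (g gh : SchwartzMap ℝ ℂ) :
    Integrable (fun k : ℝ => ((w k : ℝ) : ℂ) * g (k / (2 * Real.pi)) *
      gh (-k / (2 * Real.pi))) := by
  obtain ⟨Ch, _, hCh⟩ := gh.decay 0 0
  have hCh' : ∀ x, ‖gh x‖ ≤ Ch := by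
    intro x; simpa using hCh x
  apply Integrable.mono ((intmaj T g).mul_const Ch)
  · apply AEStronglyMeasurable.mul
    apply AEStronglyMeasurable.mul
    · exact (Complex.measurable_ofReal.comp hw).aestronglyMeasurable
    · exact (g.continuous.comp (continuous_id.div_const _)).aestronglyMeasurable
    · exact (gh.continuous.comp (continuous_id.neg.div_const _)).aestronglyMeasurable
  · filter_upwards with k
    have h1 : ‖((w k : ℝ) : ℂ) * g (k / (2 * Real.pi)) * gh (-k / (2 * Real.pi))‖
        = |w k| * ‖g (k / (2 * Real.pi))‖ * ‖gh (-k / (2 * Real.pi))‖ := by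
      simp [norm_mul, Complex.norm_real, Real.norm_eq_abs]
    rw [h1]
    have h2 : |w k| * ‖g (k / (2 * Real.pi))‖ * ‖gh (-k / (2 * Real.pi))‖
        ≤ (|k| + T) * ‖g (k / (2 * Real.pi))‖ * Ch := by
      gcongr
      · exact mul_nonneg ((abs_nonneg _).trans (hwb k)) (norm_nonneg _)
      · exact hwb k
      · exact hCh' _
    exact h2.trans (le_abs_self _)

/-- The KMS condition at temperature `T > 0` for the thermal boundary two-point
function of Schwartz functions `f, h`:
`∫ (k e^{−k/T}/(1 − e^{−k/T})) f̂(k) ĥ(−k) dk = ∫ (k/(1 − e^{−k/T})) ĥ(k) f̂(−k) dk`,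
both integrals converging absolutely. -/
theorem thermal_boundary_KMS (T : ℝ) (hT : 0 < T) (f h : SchwartzMap ℝ ℂ) :
    IntegrableOn
      (fun k : ℝ => ((k * Real.exp (-k / T) / (1 - Real.exp (-k / T)) : ℝ) : ℂ) *
        ft (fun u => f u) k * ft (fun u => h u) (-k)) {(0 : ℝ)}ᶜ ∧
    IntegrableOn
      (fun k : ℝ => ((k / (1 - Real.exp (-k / T)) : ℝ) : ℂ) *
        ft (fun u => h u) k * ft (fun u => f u) (-k)) {(0 : ℝ)}ᶜ ∧
    (∫ k in {(0 : ℝ)}ᶜ, ((k * Real.exp (-k / T) / (1 - Real.exp (-k / T)) : ℝ) : ℂ) *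
        ft (fun u => f u) k * ft (fun u => h u) (-k)) =
      ∫ k in {(0 : ℝ)}ᶜ, ((k / (1 - Real.exp (-k / T)) : ℝ) : ℂ) *
        ft (fun u => h u) k * ft (fun u => f u) (-k) := by
  set gf := SchwartzMap.fourierTransformCLM ℝ f with hgf
  set gh := SchwartzMap.fourierTransformCLM ℝ h with hgh
  set w₁ : ℝ → ℝ := fun k => k * Real.exp (-k / T) / (1 - Real.exp (-k / T)) with hw₁
  set w₂ : ℝ → ℝ := fun k => k / (1 - Real.exp (-k / T)) with hw₂
  set F : ℝ → ℂ := fun k => ((w₁ k : ℝ) : ℂ) * gf (k / (2 * Real.pi)) *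
    gh (-k / (2 * Real.pi)) with hF
  set G : ℝ → ℂ := fun k => ((w₂ k : ℝ) : ℂ) * gh (k / (2 * Real.pi)) *
    gf (-k / (2 * Real.pi)) with hG
  have mexp : Measurable fun k : ℝ => Real.exp (-k / T) :=
    Real.measurable_exp.comp (measurable_id.neg.div_const T)
  have mw₁ : Measurable w₁ := (measurable_id.mul mexp).div (measurable_const.sub mexp)
  have mw₂ : Measurable w₂ := measurable_id.div (measurable_const.sub mexp)
  have bw₂ : ∀ k, |w₂ k| ≤ |k| + T := fun k => bB hT k
  have bw₁ : ∀ k, |w₁ k| ≤ |k| + T := by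
    intro k
    have hval : w₁ k = -(k / (1 - Real.exp (k / T))) := by
      show k * Real.exp (-k / T) / (1 - Real.exp (-k / T)) = _
      rw [wid hT k, neg_div]
    rw [hval, abs_neg]
    have h2 := bB hT (-k)
    simp only [neg_neg, neg_div, abs_neg] at h2
    exact h2
  have e1 : (fun k : ℝ => ((k * Real.exp (-k / T) / (1 - Real.exp (-k / T)) : ℝ) : ℂ) *
      ft (fun u => f u) k * ft (fun u => h u) (-k)) = F := by
    funext k
    rw [hF, ft_eq f k, ft_eq h (-k)]
  have e2 : (fun k : ℝ => ((k / (1 - Real.exp (-k / T)) : ℝ) : ℂ) *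
      ft (fun u => h u) k * ft (fun u => f u) (-k)) = G := by
    funext k
    rw [hG, ft_eq h k, ft_eq f (-k)]
  have IF : Integrable F := main_integrable T w₁ mw₁ bw₁ gf gh
  have IG : Integrable G := main_integrable T w₂ mw₂ bw₂ gh gf
  have key : ∀ k : ℝ, F (-k) = G k := by
    intro k
    rw [hF, hG]
    simp only [neg_neg]
    have hw : w₁ (-k) = w₂ k := by
      rw [hw₁, hw₂]
      simp only [neg_neg]
      have := wid hT (-k)
      rw [neg_neg] at this
      rw [this]
    rw [hw]
    ring
  have hS : MeasurableSet ({(0 : ℝ)}ᶜ) := (measurableSet_singleton 0).compl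
  refine ⟨e1 ▸ IF.integrableOn, e2 ▸ IG.integrableOn, ?_⟩
  rw [show (∫ k in {(0 : ℝ)}ᶜ, ((k * Real.exp (-k / T) / (1 - Real.exp (-k / T)) : ℝ) : ℂ) *
        ft (fun u => f u) k * ft (fun u => h u) (-k)) = ∫ k in {(0 : ℝ)}ᶜ, F k from by rw [e1],
      show (∫ k in {(0 : ℝ)}ᶜ, ((k / (1 - Real.exp (-k / T)) : ℝ) : ℂ) *
        ft (fun u => h u) k * ft (fun u => f u) (-k)) = ∫ k in {(0 : ℝ)}ᶜ, G k from by rw [e2]]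
  calc (∫ k in {(0 : ℝ)}ᶜ, F k) = ∫ k, Set.indicator {(0 : ℝ)}ᶜ F k :=
        (integral_indicator hS).symm
    _ = ∫ k, Set.indicator {(0 : ℝ)}ᶜ F (-k) := (integral_neg_eq_self _ _).symm
    _ = ∫ k, Set.indicator {(0 : ℝ)}ᶜ G k := by
        congr 1
        funext k
        rw [Set.indicator_apply, Set.indicator_apply]
        exact if_congr (by simp) (key k) rfl
    _ = ∫ k in {(0 : ℝ)}ᶜ, G k := integral_indicator hS
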